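/- Let Π be a p×p orthogonal projection, U = I − 2Π, and let Γ be a p×p diagonal matrix with all diagonal entries bounded in absolute value by M. Then for each j, |(UΓUᵀ)_{jj} − Γ_{jj}| ≤ 8M·Π_{jj}, and consequently (1/p) Σ_{j=1}^p |(UΓUᵀ)_{jj} − Γ_{jj}| ≤ 8M·rank(Π)/p. -/

import Mathlib

open Matrix

lemma rank_eq_trace_of_idem (p : ℕ) (P : Matrix (Fin p) (Fin p) ℝ)
    (h : P * P = P) : (P.rank : ℝ) = P.trace := by
  have hcomp : P.mulVecLin ∘ₗ P.mulVecLin = P.mulVecLin := by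
    rw [← Matrix.mulVecLin_mul, h]
  have hproj : LinearMap.IsProj (LinearMap.range P.mulVecLin) P.mulVecLin := by
    constructor
    · intro x; exact LinearMap.mem_range_self _ x
    · rintro x ⟨y, rfl⟩
      exact congrFun (congrArg DFunLike.coe hcomp) y
  have htr := hproj.trace
  have h2 : LinearMap.trace ℝ (Fin p → ℝ) P.mulVecLin = P.trace := by
    rw [LinearMap.trace_eq_matrix_trace ℝ (Pi.basisFun ℝ (Fin p))]
    congr 1
    rw [LinearMap.toMatrix_eq_toMatrix', ← Matrix.toLin'_apply' P,
      LinearMap.toMatrix'_toLin']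
  rw [Matrix.rank, ← h2, htr]

/-- For an orthogonal projection `Π`, `U = I − 2Π`, and a diagonal matrix `Γ` with
entries bounded by `M`: `|(UΓUᵀ)_{jj} − Γ_{jj}| ≤ 8MΠ_{jj}` for each `j`, and the
average deviation is at most `8M·rank(Π)/p`. -/
theorem projection_perturbation_diagonal_bound
    (p : ℕ) (P : Matrix (Fin p) (Fin p) ℝ)
    (hsymm : Pᵀ = P) (hidem : P * P = P)
    (M : ℝ) (d : Fin p → ℂ) (hd : ∀ j, ‖d j‖ ≤ M) :
    (∀ j : Fin p,
        ‖((((1 : Matrix (Fin p) (Fin p) ℝ) - 2 • P).map Complex.ofReal * diagonal d *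
              (((1 : Matrix (Fin p) (Fin p) ℝ) - 2 • P).map Complex.ofReal)ᵀ) j j - d j)‖
          ≤ 8 * M * P j j)
      ∧ (1 / (p : ℝ)) * ∑ j : Fin p,
          ‖((((1 : Matrix (Fin p) (Fin p) ℝ) - 2 • P).map Complex.ofReal * diagonal d *
                (((1 : Matrix (Fin p) (Fin p) ℝ) - 2 • P).map Complex.ofReal)ᵀ) j j - d j)‖
          ≤ 8 * M * (P.rank : ℝ) / p := by
  -- sum of squares of a row equals the diagonal entry
  have hPj : ∀ j, ∑ k, P j k * P j k = P j j := by
    intro j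
    have h1 := congrFun (congrFun hidem j) j
    rw [Matrix.mul_apply] at h1
    rw [← h1]
    refine Finset.sum_congr rfl fun k _ => ?_
    rw [← congrFun (congrFun hsymm j) k]
    rfl
  have hPnn : ∀ j, 0 ≤ P j j := by
    intro j
    rw [← hPj j]
    exact Finset.sum_nonneg fun k _ => mul_self_nonneg _
  -- entry computation
  have hentry : ∀ j : Fin p,
      ((((1 : Matrix (Fin p) (Fin p) ℝ) - 2 • P).map Complex.ofReal * diagonal d *
          (((1 : Matrix (Fin p) (Fin p) ℝ) - 2 • P).map Complex.ofReal)ᵀ) j j - d j)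
        = 4 * (∑ k, ((P j k : ℂ))^2 * d k) - 4 * (P j j : ℂ) * d j := by
    intro j
    have hQ : ∀ k, ((1 : Matrix (Fin p) (Fin p) ℝ) - 2 • P) j k
        = (if j = k then (1:ℝ) else 0) - 2 * P j k := by
      intro k
      rw [Matrix.sub_apply, two_smul, Matrix.add_apply, Matrix.one_apply]
      ring
    have hE : (((1 : Matrix (Fin p) (Fin p) ℝ) - 2 • P).map Complex.ofReal * diagonal d *
          (((1 : Matrix (Fin p) (Fin p) ℝ) - 2 • P).map Complex.ofReal)ᵀ) j j
        = ∑ k, (((if j = k then (1:ℝ) else 0) - 2 * P j k : ℝ) : ℂ) * d k *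
            (((if j = k then (1:ℝ) else 0) - 2 * P j k : ℝ) : ℂ) := by
      rw [Matrix.mul_apply]
      refine Finset.sum_congr rfl fun k _ => ?_
      simp only [Matrix.mul_diagonal, Matrix.transpose_apply, Matrix.map_apply, hQ]
    rw [hE]
    have hsplit : ∀ k, (((if j = k then (1:ℝ) else 0) - 2 * P j k : ℝ) : ℂ) * d k *
            (((if j = k then (1:ℝ) else 0) - 2 * P j k : ℝ) : ℂ)
        = ((if j = k then d k else 0) - (if j = k then 4 * ((P j k : ℂ) * d k) else 0))
            + 4 * (((P j k : ℂ))^2 * d k) := by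
      intro k
      by_cases h : j = k <;> simp [h] <;> push_cast <;> ring
    rw [Finset.sum_congr rfl fun k _ => hsplit k, Finset.sum_add_distrib,
      Finset.sum_sub_distrib, Finset.sum_ite_eq, Finset.sum_ite_eq, ← Finset.mul_sum]
    simp only [Finset.mem_univ, if_true]
    ring
  -- pointwise bound
  have hpt : ∀ j : Fin p,
      ‖((((1 : Matrix (Fin p) (Fin p) ℝ) - 2 • P).map Complex.ofReal * diagonal d *
              (((1 : Matrix (Fin p) (Fin p) ℝ) - 2 • P).map Complex.ofReal)ᵀ) j j - d j)‖
        ≤ 8 * M * P j j := by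
    intro j
    rw [hentry j]
    refine (norm_sub_le _ _).trans ?_
    have h2 : ‖4 * (∑ k, ((P j k : ℂ))^2 * d k)‖ ≤ 4 * (M * P j j) := by
      rw [norm_mul]
      have h4 : ‖(4:ℂ)‖ = 4 := by norm_num
      rw [h4]
      have hS : ‖∑ k, ((P j k : ℂ))^2 * d k‖ ≤ M * P j j := by
        refine (norm_sum_le _ _).trans ?_
        have hterm : ∀ k, ‖((P j k : ℂ))^2 * d k‖ ≤ (P j k)^2 * M := by
          intro k
          rw [norm_mul, norm_pow, Complex.norm_real, Real.norm_eq_abs]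
          calc |P j k|^2 * ‖d k‖ ≤ |P j k|^2 * M := by
                exact mul_le_mul_of_nonneg_left (hd k) (by positivity)
            _ = (P j k)^2 * M := by rw [sq_abs]
        refine (Finset.sum_le_sum fun k _ => hterm k).trans ?_
        rw [← Finset.sum_mul]
        have : ∑ k, (P j k)^2 = P j j := by
          rw [← hPj j]; exact Finset.sum_congr rfl fun k _ => sq (P j k) ▸ by ring
        rw [this, mul_comm]
      linarith
    have h3 : ‖4 * (P j j : ℂ) * d j‖ ≤ 4 * (M * P j j) := by
      rw [norm_mul, norm_mul]
      have h4 : ‖(4:ℂ)‖ = 4 := by norm_num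
      rw [h4, Complex.norm_real, Real.norm_eq_abs, abs_of_nonneg (hPnn j)]
      have := mul_le_mul_of_nonneg_left (hd j) (hPnn j)
      nlinarith [hPnn j]
    linarith
  refine ⟨hpt, ?_⟩
  rcases Nat.eq_zero_or_pos p with hp | hp
  · subst hp
    simp
  · have hM : 0 ≤ M := le_trans (norm_nonneg _) (hd ⟨0, hp⟩)
    have hsum : ∑ j : Fin p,
        ‖((((1 : Matrix (Fin p) (Fin p) ℝ) - 2 • P).map Complex.ofReal * diagonal d *
              (((1 : Matrix (Fin p) (Fin p) ℝ) - 2 • P).map Complex.ofReal)ᵀ) j j - d j)‖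
        ≤ 8 * M * P.trace := by
      rw [Matrix.trace, Finset.mul_sum]
      exact Finset.sum_le_sum fun j _ => hpt j
    have htr : (P.rank : ℝ) = P.trace := rank_eq_trace_of_idem p P hidem
    have hp' : (0:ℝ) < p := by exact_mod_cast hp
    rw [htr]
    have h8 : 8 * M * P.trace / p = (1/(p:ℝ)) * (8 * M * P.trace) := by ring
    rw [h8]
    exact mul_le_mul_of_nonneg_left hsum (by positivity)
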